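/- Suppose that the minimum length of a (k+1)-dimensional t-all-symbol batch code over F_q is exactly one more than the minimum length for dimension k, i.e., ASB(k+1,t,q) = ASB(k,t,q) + 1. Then every rank-(k+1) matrix G ∈ F_q^{(k+1)×n} with n = ASB(k+1,t,q) satisfying the t-all-symbol batch property has pairwise distinct columns. -/

import Mathlib

open Matrix

/-- `G` serves the list of vectors `v` (indexed by `ι`) if there are pairwise disjoint
recovery sets `R i` of column indices with `v i` in the span of the columns indexed by `R i`. -/
def Serves (F : Type*) [Field F] {m n ι : Type*} (G : Matrix m n F) (v : ι → (m → F)) : Prop :=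
  ∃ R : ι → Set n, (Pairwise fun a b => Disjoint (R a) (R b)) ∧
    ∀ i, v i ∈ Submodule.span F ((fun j a => G a j) '' R i)

/-- the `t`-all-symbol PIR property. -/
def ASPIR (F : Type*) [Field F] {m n : Type*} (t : ℕ) (G : Matrix m n F) : Prop :=
  ∀ j : n, Serves F G fun _ : Fin t => fun a => G a j

/-- the `t`-all-symbol batch property. -/
def ASBatch (F : Type*) [Field F] {m n : Type*} (t : ℕ) (G : Matrix m n F) : Prop :=
  ∀ c : Fin t → n, Serves F G fun i => fun a => G a (c i)

theorem stmt17 {F : Type*} [Field F] {k t N : ℕ}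
    (h1 : IsLeast {n : ℕ | ∃ G : Matrix (Fin (k + 1)) (Fin n) F,
        G.rank = k + 1 ∧ ASBatch F t G} (N + 1))
    (h2 : IsLeast {n : ℕ | ∃ G : Matrix (Fin k) (Fin n) F,
        G.rank = k ∧ ASBatch F t G} N) :
    ∀ G : Matrix (Fin (k + 1)) (Fin (N + 1)) F, G.rank = k + 1 → ASBatch F t G →
      Function.Injective fun j : Fin (N + 1) => fun i => G i j := by
  classical
  intro G hrank hbatch
  by_contra hinj
  rw [Function.not_injective_iff] at hinj
  obtain ⟨j1, j2, hcol, hne⟩ := hinj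
  -- N ≥ 1
  have hN : 1 ≤ N := by
    by_contra h
    interval_cases N
    exact hne (Fin.ext (by omega))
  -- the repeated column
  set colG : Fin (N + 1) → (Fin (k + 1) → F) := fun j a => G a j with hcolG
  set v : Fin (k + 1) → F := colG j1 with hv
  have hcol2 : colG j2 = v := hcol.symm
  -- a line W containing v
  set w : Fin (k + 1) → F := if v = 0 then Pi.single 0 1 else v with hw
  have hw0 : w ≠ 0 := by
    rw [hw]
    by_cases hv0 : v = 0
    · rw [if_pos hv0]
      intro h0
      have := congrFun h0 0
      simp at this
    · rw [if_neg hv0]; exact hv0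
  set W : Submodule F (Fin (k + 1) → F) := Submodule.span F {w} with hW
  have hvW : v ∈ W := by
    rw [hW, hw]
    by_cases hv0 : v = 0
    · rw [if_pos hv0, hv0]; exact Submodule.zero_mem _
    · rw [if_neg hv0]; exact Submodule.mem_span_singleton_self _
  have hWrank : Module.finrank F W = 1 := finrank_span_singleton hw0
  -- the projection
  have hQ : Module.finrank F ((Fin (k + 1) → F) ⧸ W) = k := by
    have h := Submodule.finrank_quotient_add_finrank W
    rw [hWrank, Module.finrank_fin_fun] at h
    omega
  obtain e := LinearEquiv.ofFinrankEq ((Fin (k + 1) → F) ⧸ W) (Fin k → F)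
    (by rw [hQ, Module.finrank_fin_fun])
  set π : (Fin (k + 1) → F) →ₗ[F] (Fin k → F) := e.toLinearMap ∘ₗ W.mkQ with hπ
  have hπsurj : Function.Surjective π := e.surjective.comp W.mkQ_surjective
  have hπker : ∀ x ∈ W, π x = 0 := by
    intro x hx
    simp only [hπ, LinearMap.comp_apply]
    rw [show W.mkQ x = 0 from (Submodule.Quotient.mk_eq_zero W).2 hx]
    exact map_zero _
  -- the column index equivalence
  have hc : Fintype.card {j : Fin (N + 1) // j ≠ j1 ∧ j ≠ j2} = N - 1 := by
    classical
    have h1 : ∀ j : Fin (N + 1), (j ≠ j1 ∧ j ≠ j2) ↔ j ∉ ({j1, j2} : Finset (Fin (N + 1))) := by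
      intro j; simp [not_or]
    rw [Fintype.card_congr (Equiv.subtypeEquivRight h1), Fintype.card_subtype_compl]
    have : Fintype.card {x : Fin (N + 1) // x ∈ ({j1, j2} : Finset (Fin (N + 1)))} = 2 := by
      rw [Fintype.card_coe]
      rw [Finset.card_insert_of_notMem (by simpa using hne), Finset.card_singleton]
    rw [this, Fintype.card_fin]
    omega
  have ec : {j : Fin (N + 1) // j ≠ j1 ∧ j ≠ j2} ≃ Fin (N - 1) :=
    Fintype.equivFinOfCardEq hc
  -- the punctured projected matrix
  set G' : Matrix (Fin k) (Fin (N - 1)) F :=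
    Matrix.of fun i j => π (colG (ec.symm j).val) i with hG'
  have hcolG' : ∀ x : {j : Fin (N + 1) // j ≠ j1 ∧ j ≠ j2},
      (fun i => G' i (ec x)) = π (colG x.val) := by
    intro x
    funext i
    simp [hG']
  -- columns of G span everything
  have hspanG : Submodule.span F (Set.range colG) = ⊤ := by
    have hre : Set.range colG = Set.range Gᵀ := rfl
    rw [hre]
    apply Submodule.eq_top_of_finrank_eq
    rw [← Matrix.col.eq_1, ← Matrix.rank_eq_finrank_span_cols, hrank, Module.finrank_fin_fun]
  -- key: punctured span joined with W is everything
  have hkey : Submodule.span F (colG '' {j | j ≠ j1 ∧ j ≠ j2}) ⊔ W = ⊤ := by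
    rw [← top_le_iff, ← hspanG, Submodule.span_le]
    rintro y ⟨j, rfl⟩
    by_cases hj : j ≠ j1 ∧ j ≠ j2
    · exact Submodule.mem_sup_left (Submodule.subset_span ⟨j, hj, rfl⟩)
    · have : colG j = v := by
        rcases not_and_or.mp hj with h | h
        · rw [not_not.mp h]
        · rw [not_not.mp h, hcol2]
      rw [this]
      exact Submodule.mem_sup_right hvW
  have hmapπ : ∀ s : Set (Fin (k + 1) → F),
      Submodule.map π (Submodule.span F s) = Submodule.span F (π '' s) :=
    fun s => (Submodule.span_image π).symm
  -- rank of G'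
  have hrank' : G'.rank = k := by
    have hr : Set.range G'ᵀ = π '' (colG '' {j | j ≠ j1 ∧ j ≠ j2}) := by
      ext y
      constructor
      · rintro ⟨j, rfl⟩
        refine ⟨colG (ec.symm j).val, ⟨(ec.symm j).val, (ec.symm j).property, rfl⟩, ?_⟩
        rw [← hcolG' (ec.symm j), Equiv.apply_symm_apply]
        rfl
      · rintro ⟨x, ⟨j, hj, rfl⟩, rfl⟩
        exact ⟨ec ⟨j, hj⟩, (hcolG' ⟨j, hj⟩).symm ▸ rfl⟩
    rw [Matrix.rank_eq_finrank_span_cols, Matrix.col.eq_1, hr, ← hmapπ]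
    have : Submodule.map π (Submodule.span F (colG '' {j | j ≠ j1 ∧ j ≠ j2})) = ⊤ := by
      have hWker : Submodule.map π W = ⊥ := by
        rw [Submodule.eq_bot_iff]
        rintro x ⟨y, hy, rfl⟩
        exact hπker y hy
      have := congrArg (Submodule.map π) hkey
      rwa [Submodule.map_sup, hWker, sup_bot_eq, Submodule.map_top,
        LinearMap.range_eq_top.2 hπsurj] at this
    rw [this, finrank_top, Module.finrank_fin_fun]
  -- batch property of G'
  have hbatch' : ASBatch F t G' := by
    intro c
    obtain ⟨R, hdisj, hmem⟩ := hbatch fun i => (ec.symm (c i)).val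
    refine ⟨fun i => {j | (ec.symm j).val ∈ R i}, ?_, ?_⟩
    · intro a b hab
      rw [Set.disjoint_left]
      intro j hja hjb
      exact Set.disjoint_left.mp (hdisj hab) hja hjb
    · intro i
      have h1 : (fun a => G' a (c i)) = π (colG (ec.symm (c i)).val) := by
        funext a; simp [hG']
      beta_reduce
      rw [h1]
      have h2 : π (colG (ec.symm (c i)).val) ∈
          Submodule.map π (Submodule.span F ((fun j a => G a j) '' R i)) :=
        Submodule.mem_map_of_mem (hmem i)
      rw [hmapπ] at h2
      refine Submodule.span_le.mpr ?_ h2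
      rintro y ⟨x, ⟨j, hj, rfl⟩, rfl⟩
      by_cases hjj : j ≠ j1 ∧ j ≠ j2
      · apply Submodule.subset_span
        exact ⟨ec ⟨j, hjj⟩, by simp [hj], hcolG' ⟨j, hjj⟩⟩
      · have hxv : (fun a => G a j) = v := by
          rcases not_and_or.mp hjj with h | h
          · rw [not_not.mp h]
          · rw [not_not.mp h]; exact hcol2
        show π (colG j) ∈ _
        rw [show colG j = v from hxv, hπker v hvW]
        exact Submodule.zero_mem _
  -- contradiction with minimality
  have := h2.2 ⟨G', hrank', hbatch'⟩
  omega
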